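/- For every s ≥ 0 and 0 ≤ ε ≤ 1, there is a constant C (independent of c) such that ‖(P_c^± − P_∞^±)u‖_{H^s} ≤ C c^{−ε} ‖u‖_{H^{s+ε}} for all u ∈ H^{s+ε}(ℝ³, ℂ⁴). -/

import Mathlib

open Matrix MeasureTheory FourierTransform ENNReal

noncomputable section

/-- The Pauli matrices σ₁, σ₂, σ₃. -/
def pauli : Fin 3 → Matrix (Fin 2) (Fin 2) ℂ
  | 0 => !![0, 1; 1, 0]
  | 1 => !![0, -Complex.I; Complex.I, 0]
  | 2 => !![1, 0; 0, -1]

/-- The Dirac matrices αₖ = [[0, σₖ], [σₖ, 0]]. -/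
def alphaM (k : Fin 3) : Matrix (Fin 4) (Fin 4) ℂ :=
  Matrix.reindex finSumFinEquiv finSumFinEquiv <|
    Matrix.fromBlocks 0 (pauli k) (pauli k) 0

/-- The Dirac matrix β = diag(I₂, −I₂). -/
def betaM : Matrix (Fin 4) (Fin 4) ℂ :=
  Matrix.reindex finSumFinEquiv finSumFinEquiv <|
    Matrix.fromBlocks (1 : Matrix (Fin 2) (Fin 2) ℂ) 0 0 (-1 : Matrix (Fin 2) (Fin 2) ℂ)

/-- The Fourier symbol of the free Dirac operator D_c = −icα·∇ + mc²β. -/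
def diracSymbol (m c : ℝ) (ξ : EuclideanSpace ℝ (Fin 3)) : Matrix (Fin 4) (Fin 4) ℂ :=
  (m * c ^ 2 : ℂ) • betaM + (c : ℂ) • ∑ k : Fin 3, (ξ k : ℂ) • alphaM k

/-- λ_c(ξ) = √(m²c⁴ + c²|ξ|²), the symbol of |D_c|. -/
def lamc (m c : ℝ) (ξ : EuclideanSpace ℝ (Fin 3)) : ℝ :=
  Real.sqrt (m ^ 2 * c ^ 4 + c ^ 2 * ‖ξ‖ ^ 2)

/-- The Fourier symbol of P_c^± = ½(I ± D_c|D_c|⁻¹); `sgn = ±1`. -/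
def projSymbol (m c sgn : ℝ) (ξ : EuclideanSpace ℝ (Fin 3)) : Matrix (Fin 4) (Fin 4) ℂ :=
  (1 / 2 : ℂ) • ((1 : Matrix (Fin 4) (Fin 4) ℂ) +
    ((sgn / lamc m c ξ : ℝ) : ℂ) • diracSymbol m c ξ)

/-- Pointwise action of a 4×4 matrix on a spinor. -/
def mulVecE (M : Matrix (Fin 4) (Fin 4) ℂ) (v : EuclideanSpace ℂ (Fin 4)) :
    EuclideanSpace ℂ (Fin 4) := (WithLp.equiv 2 _).symm (M.mulVec ((WithLp.equiv 2 _) v))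

/-- The symbol of the block projection P_∞^± onto the first/last two spinor
components: P_∞^± = ½(I₄ ± β), i.e. P_∞^+ = diag(1,1,0,0), P_∞^- = I₄ − P_∞^+. -/
def pinfSymbol (sgn : ℝ) : Matrix (Fin 4) (Fin 4) ℂ :=
  (1 / 2 : ℂ) • ((1 : Matrix (Fin 4) (Fin 4) ℂ) + (sgn : ℂ) • betaM)

lemma fsymm0 : (finSumFinEquiv (m := 2) (n := 2)).symm 0 = Sum.inl 0 := by decide
lemma fsymm1 : (finSumFinEquiv (m := 2) (n := 2)).symm 1 = Sum.inl 1 := by decide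
lemma fsymm2 : (finSumFinEquiv (m := 2) (n := 2)).symm 2 = Sum.inr 0 := by decide
lemma fsymm3 : (finSumFinEquiv (m := 2) (n := 2)).symm 3 = Sum.inr 1 := by decide

lemma betaM_eq : betaM = !![1,0,0,0;0,1,0,0;0,0,-1,0;0,0,0,-1] := by
  ext i j
  fin_cases i <;> fin_cases j <;>
    simp [betaM, Matrix.fromBlocks, fsymm0, fsymm1, fsymm2, fsymm3, Matrix.one_apply,
      Matrix.vecHead, Matrix.vecTail]

lemma alphaM0_eq : alphaM 0 = !![0,0,0,1;0,0,1,0;0,1,0,0;1,0,0,0] := by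
  ext i j
  fin_cases i <;> fin_cases j <;>
    simp [alphaM, pauli, Matrix.fromBlocks, fsymm0, fsymm1, fsymm2, fsymm3,
      Matrix.vecHead, Matrix.vecTail]

lemma alphaM1_eq : alphaM 1 = !![0,0,0,-Complex.I;0,0,Complex.I,0;0,-Complex.I,0,0;Complex.I,0,0,0] := by
  ext i j
  fin_cases i <;> fin_cases j <;>
    simp [alphaM, pauli, Matrix.fromBlocks, fsymm0, fsymm1, fsymm2, fsymm3,
      Matrix.vecHead, Matrix.vecTail]

lemma alphaM2_eq : alphaM 2 = !![0,0,1,0;0,0,0,-1;1,0,0,0;0,-1,0,0] := by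
  ext i j
  fin_cases i <;> fin_cases j <;>
    simp [alphaM, pauli, Matrix.fromBlocks, fsymm0, fsymm1, fsymm2, fsymm3,
      Matrix.vecHead, Matrix.vecTail]

lemma diff_eq (m c sgn : ℝ) (ξ : EuclideanSpace ℝ (Fin 3)) (hL : lamc m c ξ ≠ 0) :
    projSymbol m c sgn ξ - pinfSymbol sgn =
    ((sgn / 2 : ℝ) : ℂ) •
      (((m * c ^ 2 / lamc m c ξ - 1 : ℝ) : ℂ) • betaM +
        ((c / lamc m c ξ : ℝ) : ℂ) • ∑ k : Fin 3, (ξ k : ℂ) • alphaM k) := by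
  have hLC : (lamc m c ξ : ℂ) ≠ 0 := by exact_mod_cast hL
  ext i j
  simp only [projSymbol, pinfSymbol, diracSymbol, Matrix.sub_apply, Matrix.smul_apply,
    Matrix.add_apply, smul_eq_mul]
  push_cast
  field_simp
  ring

set_option maxHeartbeats 1000000 in
lemma entry_bound (m c sgn : ℝ) (hm : 0 < m) (hc : 0 < c) (hsgn : sgn = 1 ∨ sgn = -1)
    (ξ : EuclideanSpace ℝ (Fin 3)) :
    ∀ i j, ‖(projSymbol m c sgn ξ - pinfSymbol sgn) i j‖ ≤
      c * ‖ξ‖ / lamc m c ξ := by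
  have hL : 0 < lamc m c ξ := Real.sqrt_pos.mpr (by positivity)
  have hs1 : |sgn| = 1 := by rcases hsgn with h | h <;> subst h <;> norm_num
  have hnorm : ‖ξ‖ = Real.sqrt (ξ 0 ^ 2 + ξ 1 ^ 2 + ξ 2 ^ 2) := by
    rw [EuclideanSpace.norm_eq, Fin.sum_univ_three]
    simp [Real.norm_eq_abs, sq_abs]
  have hξ2 : |ξ 2| ≤ ‖ξ‖ := by
    rw [hnorm, ← Real.sqrt_sq_eq_abs]
    exact Real.sqrt_le_sqrt (by nlinarith [sq_nonneg (ξ 0), sq_nonneg (ξ 1)])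
  have hplus : ‖(ξ 0 : ℂ) + (ξ 1 : ℂ) * Complex.I‖ ≤ ‖ξ‖ := by
    rw [Complex.norm_def, hnorm]
    refine Real.sqrt_le_sqrt ?_
    simp [Complex.normSq_apply]
    nlinarith [sq_nonneg (ξ 2)]
  have hminus : ‖(ξ 0 : ℂ) + -((ξ 1 : ℂ) * Complex.I)‖ ≤ ‖ξ‖ := by
    rw [Complex.norm_def, hnorm]
    refine Real.sqrt_le_sqrt ?_
    simp [Complex.normSq_apply]
    nlinarith [sq_nonneg (ξ 2)]
  have hmc : m * c ^ 2 ≤ lamc m c ξ := by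
    rw [lamc, show m ^ 2 * c ^ 4 = (m * c ^ 2) ^ 2 by ring]
    calc m * c ^ 2 = Real.sqrt ((m * c ^ 2) ^ 2) := (Real.sqrt_sq (by positivity)).symm
      _ ≤ _ := Real.sqrt_le_sqrt (by nlinarith [sq_nonneg ‖ξ‖, sq_nonneg c])
  have hLle : lamc m c ξ ≤ m * c ^ 2 + c * ‖ξ‖ := by
    rw [lamc]
    calc Real.sqrt (m ^ 2 * c ^ 4 + c ^ 2 * ‖ξ‖ ^ 2)
        ≤ Real.sqrt ((m * c ^ 2 + c * ‖ξ‖) ^ 2) := Real.sqrt_le_sqrt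
          (by nlinarith [mul_nonneg (mul_nonneg hm.le (pow_pos hc 3).le) (norm_nonneg ξ)])
      _ = m * c ^ 2 + c * ‖ξ‖ := Real.sqrt_sq (by positivity)
  have hd : |m * c ^ 2 / lamc m c ξ - 1| ≤ c * ‖ξ‖ / lamc m c ξ := by
    rw [abs_of_nonpos (by rw [sub_nonpos, div_le_one hL]; exact hmc)]
    rw [neg_sub, sub_le_iff_le_add, ← add_div, le_div_iff₀ hL, one_mul]
    linarith
  have keyx : ∀ x : ℝ, 0 ≤ x → x ≤ ‖ξ‖ →
      |sgn| / 2 * (|c| / |lamc m c ξ| * x) ≤ c * ‖ξ‖ / lamc m c ξ := by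
    intro x hx0 hx
    rw [hs1, abs_of_pos hc, abs_of_pos hL]
    have h1 : c / lamc m c ξ * x ≤ c / lamc m c ξ * ‖ξ‖ :=
      mul_le_mul_of_nonneg_left hx (by positivity)
    have h2 : c / lamc m c ξ * ‖ξ‖ = c * ‖ξ‖ / lamc m c ξ := by ring
    have h3 : 0 ≤ c / lamc m c ξ * x := by positivity
    linarith
  have keyd : ∀ z : ℂ, ‖z‖ ≤ c * ‖ξ‖ / lamc m c ξ →
      |sgn| / 2 * ‖z‖ ≤ c * ‖ξ‖ / lamc m c ξ := by
    intro z hz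
    rw [hs1]
    have := norm_nonneg z
    linarith
  have hcast1 : ((m : ℂ) * (c : ℂ) ^ 2 / (lamc m c ξ : ℂ) - 1) =
      ((m * c ^ 2 / lamc m c ξ - 1 : ℝ) : ℂ) := by push_cast; ring
  have hcast2 : (1 - (m : ℂ) * (c : ℂ) ^ 2 / (lamc m c ξ : ℂ)) =
      ((1 - m * c ^ 2 / lamc m c ξ : ℝ) : ℂ) := by push_cast; ring
  intro i j
  rw [diff_eq m c sgn ξ hL.ne']
  fin_cases i <;> fin_cases j <;>
    simp [Fin.sum_univ_three, alphaM0_eq, alphaM1_eq, alphaM2_eq, betaM_eq,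
      Matrix.smul_apply, Matrix.add_apply, Matrix.vecHead, Matrix.vecTail, _root_.map_mul,
      Complex.norm_real] <;>
  first
    | positivity
    | (rw [hcast1, Complex.norm_real, Real.norm_eq_abs, hs1];
        linarith [hd, abs_nonneg (m * c ^ 2 / lamc m c ξ - 1)])
    | (rw [hcast2, Complex.norm_real, Real.norm_eq_abs, abs_sub_comm, hs1];
        linarith [hd, abs_nonneg (m * c ^ 2 / lamc m c ξ - 1)])
    | exact keyx _ (abs_nonneg _) hξ2
    | exact keyx _ (norm_nonneg _) hplus
    | exact keyx _ (norm_nonneg _) hminus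

lemma coord_le (v : EuclideanSpace ℂ (Fin 4)) (j : Fin 4) : ‖v j‖ ≤ ‖v‖ := by
  rw [EuclideanSpace.norm_eq]
  rw [show ‖v j‖ = Real.sqrt (‖v j‖^2) from (Real.sqrt_sq (norm_nonneg _)).symm]
  exact Real.sqrt_le_sqrt (Finset.single_le_sum (f := fun i => ‖v i‖^2)
    (fun i _ => sq_nonneg _) (Finset.mem_univ j))

lemma norm_mulVecE_le (M : Matrix (Fin 4) (Fin 4) ℂ) (b : ℝ) (hb0 : 0 ≤ b)
    (hb : ∀ i j, ‖M i j‖ ≤ b) (v : EuclideanSpace ℂ (Fin 4)) :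
    ‖mulVecE M v‖ ≤ 8 * b * ‖v‖ := by
  have hcomp : ∀ i, ‖mulVecE M v i‖ ≤ 4 * (b * ‖v‖) := by
    intro i
    have h1 : mulVecE M v i = ∑ j, M i j * v j := rfl
    rw [h1]
    calc ‖∑ j, M i j * v j‖ ≤ ∑ j, ‖M i j * v j‖ := norm_sum_le _ _
      _ ≤ ∑ _j : Fin 4, b * ‖v‖ := by
          refine Finset.sum_le_sum fun j _ => ?_
          rw [norm_mul]
          exact mul_le_mul (hb i j)
            (coord_le v j) (norm_nonneg _) hb0
      _ = 4 * (b * ‖v‖) := by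
          rw [Finset.sum_const, Finset.card_univ, Fintype.card_fin]
          ring
  rw [EuclideanSpace.norm_eq]
  have hsum : ∑ i, ‖mulVecE M v i‖ ^ 2 ≤ ∑ _i : Fin 4, (4 * (b * ‖v‖)) ^ 2 := by
    refine Finset.sum_le_sum fun i _ => ?_
    exact pow_le_pow_left₀ (norm_nonneg _) (hcomp i) 2
  calc Real.sqrt (∑ i, ‖mulVecE M v i‖ ^ 2) ≤ Real.sqrt (∑ _i : Fin 4, (4 * (b * ‖v‖)) ^ 2) :=
        Real.sqrt_le_sqrt hsum
    _ = 8 * b * ‖v‖ := by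
        rw [Finset.sum_const, Finset.card_univ, Fintype.card_fin, nsmul_eq_mul]
        rw [show ((4:ℕ):ℝ) * (4 * (b * ‖v‖))^2 = (8 * b * ‖v‖)^2 by push_cast; ring]
        exact Real.sqrt_sq (by positivity)

/-- For every s ≥ 0 and 0 ≤ ε ≤ 1 there is a constant C independent of
c such that ‖(P_c^± − P_∞^±)u‖_{H^s} ≤ C c^{−ε} ‖u‖_{H^{s+ε}} for all
u ∈ H^{s+ε}(ℝ³,ℂ⁴).  The Sobolev norms are expressed on the Fourier side:
‖u‖_{H^s}² = ∫ (1+|ξ|²)^s |û(ξ)|² dξ, with v = û ranging over all Fourier profiles. -/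
theorem proj_difference_sobolev_estimate (m : ℝ) (hm : 0 < m) (s ε : ℝ)
    (hs : 0 ≤ s) (hε0 : 0 ≤ ε) (hε1 : ε ≤ 1) (sgn : ℝ) (hsgn : sgn = 1 ∨ sgn = -1) :
    ∃ C : ℝ, 0 < C ∧ ∀ (c : ℝ), 0 < c →
      ∀ v : EuclideanSpace ℝ (Fin 3) → EuclideanSpace ℂ (Fin 4),
        ∫⁻ ξ : EuclideanSpace ℝ (Fin 3),
            ENNReal.ofReal ((1 + ‖ξ‖ ^ 2) ^ s) *
              (‖mulVecE (projSymbol m c sgn ξ - pinfSymbol sgn) (v ξ)‖₊ : ℝ≥0∞) ^ 2 ≤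
          ENNReal.ofReal (C ^ 2 / c ^ (2 * ε)) *
            ∫⁻ ξ : EuclideanSpace ℝ (Fin 3),
              ENNReal.ofReal ((1 + ‖ξ‖ ^ 2) ^ (s + ε)) * (‖v ξ‖₊ : ℝ≥0∞) ^ 2 := by
  set M1 : ℝ := max 1 (1/m) with hM1
  have hM1one : (1:ℝ) ≤ M1 := le_max_left _ _
  have hM1pos : 0 < M1 := lt_of_lt_of_le one_pos hM1one
  refine ⟨8 * M1, by positivity, ?_⟩
  intro c hc v
  -- key pointwise bound
  have key : ∀ ξ : EuclideanSpace ℝ (Fin 3),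
      ‖mulVecE (projSymbol m c sgn ξ - pinfSymbol sgn) (v ξ)‖ ^ 2 ≤
        ((8*M1) ^ 2 / c ^ (2*ε)) * (1 + ‖ξ‖ ^ 2) ^ ε * ‖v ξ‖ ^ 2 := by
    intro ξ
    have hL : 0 < lamc m c ξ := Real.sqrt_pos.mpr (by positivity)
    set q : ℝ := c * ‖ξ‖ / lamc m c ξ with hqdef
    have hq0 : 0 ≤ q := by positivity
    have hMv := norm_mulVecE_le _ q hq0 (entry_bound m c sgn hm hc hsgn ξ) (v ξ)
    have hsq : ‖mulVecE (projSymbol m c sgn ξ - pinfSymbol sgn) (v ξ)‖ ^ 2 ≤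
        64 * q ^ 2 * ‖v ξ‖ ^ 2 := by
      have := pow_le_pow_left₀ (norm_nonneg _) hMv 2
      nlinarith [this]
    set t : ℝ := ‖ξ‖ / (m * c) with htdef
    have ht0 : 0 ≤ t := by positivity
    -- q ≤ 1
    have hcξ : c * ‖ξ‖ ≤ lamc m c ξ := by
      rw [lamc]
      calc c * ‖ξ‖ = Real.sqrt ((c * ‖ξ‖) ^ 2) := (Real.sqrt_sq (by positivity)).symm
        _ ≤ _ := Real.sqrt_le_sqrt (by nlinarith [sq_nonneg (m * c^2)])
    have hq1 : q ≤ 1 := by rw [hqdef, div_le_one hL]; exact hcξ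
    -- q ≤ t
    have hmc : m * c ^ 2 ≤ lamc m c ξ := by
      rw [lamc, show m ^ 2 * c ^ 4 = (m * c ^ 2) ^ 2 by ring]
      calc m * c ^ 2 = Real.sqrt ((m * c ^ 2) ^ 2) := (Real.sqrt_sq (by positivity)).symm
        _ ≤ _ := Real.sqrt_le_sqrt (by nlinarith [sq_nonneg ‖ξ‖, sq_nonneg c])
    have hqt' : q ≤ t := by
      rw [hqdef, htdef]
      have h1 : c * ‖ξ‖ / lamc m c ξ ≤ c * ‖ξ‖ / (m * c ^ 2) :=
        div_le_div_of_nonneg_left (by positivity) (by positivity) hmc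
      calc c * ‖ξ‖ / lamc m c ξ ≤ c * ‖ξ‖ / (m * c ^ 2) := h1
        _ = ‖ξ‖ / (m * c) := by field_simp
    -- q ≤ t^ε
    have hqt : q ≤ t ^ ε := by
      rcases le_or_gt t 1 with ht1 | ht1
      · rcases eq_or_lt_of_le ht0 with h0 | h0
        · have : t = 0 := h0.symm
          have : q ≤ 0 := this ▸ hqt'
          exact this.trans (Real.rpow_nonneg ht0 ε)
        · calc q ≤ t := hqt'
            _ = t ^ (1:ℝ) := (Real.rpow_one t).symm
            _ ≤ t ^ ε := Real.rpow_le_rpow_of_exponent_ge h0 ht1 hε1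
      · calc q ≤ 1 := hq1
          _ = (1:ℝ) ^ ε := (Real.one_rpow ε).symm
          _ ≤ t ^ ε := Real.rpow_le_rpow zero_le_one ht1.le hε0
    -- (t^ε)^2 bound
    have htsq : (t ^ ε) ^ 2 = ((‖ξ‖^2) ^ ε) * ((1/m^2) ^ ε) * (1 / c ^ (2*ε)) := by
      have h1 : (t ^ ε) ^ 2 = (t^2) ^ ε := by
        rw [← Real.rpow_natCast (t ^ ε) 2, ← Real.rpow_natCast t 2,
          ← Real.rpow_mul ht0, ← Real.rpow_mul ht0, mul_comm]
      rw [h1, htdef, div_pow, mul_pow,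
        show ‖ξ‖^2 / (m^2 * c^2) = ‖ξ‖^2 * (1/m^2) * (1/c^2) by ring,
        Real.mul_rpow (by positivity) (by positivity),
        Real.mul_rpow (by positivity) (by positivity)]
      congr 1
      rw [one_div, one_div, Real.inv_rpow (by positivity), ← Real.rpow_natCast c 2,
        ← Real.rpow_mul hc.le]
      norm_num
    -- (1/m^2)^ε ≤ M1^2
    have hmm2 : (1/m^2 : ℝ) ^ ε ≤ M1 ^ 2 := by
      rcases le_or_gt (1/m^2 : ℝ) 1 with h | h
      · have h1 : (1/m^2 : ℝ) ^ ε ≤ 1 := Real.rpow_le_one (by positivity) h hε0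
        nlinarith [hM1one]
      · have h1 : (1/m^2 : ℝ) ^ ε ≤ (1/m^2 : ℝ) ^ (1:ℝ) :=
          Real.rpow_le_rpow_of_exponent_le h.le hε1
        rw [Real.rpow_one] at h1
        have h2 : (1/m^2 : ℝ) = (1/m)^2 := by ring
        have h3 : (1/m : ℝ) ≤ M1 := le_max_right _ _
        have h4 : ((1:ℝ)/m)^2 ≤ M1^2 := pow_le_pow_left₀ (by positivity) h3 2
        linarith [h2 ▸ h1]
    have hcpow : (0:ℝ) < c ^ (2*ε) := Real.rpow_pos_of_pos hc _
    have hq2 : q^2 ≤ (t^ε)^2 := pow_le_pow_left₀ hq0 hqt 2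
    have hbig : 64 * q^2 ≤ (8*M1)^2 / c^(2*ε) * (1+‖ξ‖^2)^ε := by
      have hxx : (‖ξ‖^2:ℝ)^ε * ((1/m^2:ℝ)^ε) ≤ (1+‖ξ‖^2)^ε * M1^2 :=
        mul_le_mul (Real.rpow_le_rpow (sq_nonneg _) (by linarith) hε0) hmm2
          (Real.rpow_nonneg (by positivity) _) (Real.rpow_nonneg (by positivity) _)
      have h2 : (t^ε)^2 ≤ (1+‖ξ‖^2)^ε * M1^2 * (1/c^(2*ε)) := by
        rw [htsq]
        exact mul_le_mul_of_nonneg_right hxx (by positivity)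
      calc 64*q^2 ≤ 64*(t^ε)^2 := by linarith
        _ ≤ 64 * ((1+‖ξ‖^2)^ε * M1^2 * (1/c^(2*ε))) := by linarith
        _ = (8*M1)^2 / c^(2*ε) * (1+‖ξ‖^2)^ε := by field_simp; ring
    calc ‖mulVecE (projSymbol m c sgn ξ - pinfSymbol sgn) (v ξ)‖ ^ 2
        ≤ 64 * q^2 * ‖v ξ‖^2 := hsq
      _ ≤ ((8*M1)^2 / c^(2*ε) * (1+‖ξ‖^2)^ε) * ‖v ξ‖^2 :=
          mul_le_mul_of_nonneg_right hbig (sq_nonneg _)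
      _ = ((8*M1)^2 / c^(2*ε)) * (1+‖ξ‖^2)^ε * ‖v ξ‖^2 := by ring
  -- integral step
  rw [← MeasureTheory.lintegral_const_mul' _ _ ENNReal.ofReal_ne_top]
  refine lintegral_mono fun ξ => ?_
  have hA : (0:ℝ) ≤ (1+‖ξ‖^2)^s := Real.rpow_nonneg (by positivity) _
  have hB : (0:ℝ) ≤ (1+‖ξ‖^2)^(s+ε) := Real.rpow_nonneg (by positivity) _
  have hcpow : (0:ℝ) < c ^ (2*ε) := Real.rpow_pos_of_pos hc _
  have hK : (0:ℝ) ≤ (8*M1)^2 / c^(2*ε) := by positivity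
  have coe2 : ∀ x : EuclideanSpace ℂ (Fin 4), ((‖x‖₊ : ℝ≥0∞))^2 = ENNReal.ofReal (‖x‖^2) := by
    intro x
    rw [ENNReal.ofReal_pow (norm_nonneg _)]
    exact congrArg (· ^ 2) (ofReal_norm x).symm
  rw [coe2, coe2, ← ENNReal.ofReal_mul hA, ← ENNReal.ofReal_mul hB,
    ← ENNReal.ofReal_mul hK]
  refine ENNReal.ofReal_le_ofReal ?_
  have hrpow_add : (1+‖ξ‖^2:ℝ)^(s+ε) = (1+‖ξ‖^2)^s * (1+‖ξ‖^2)^ε :=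
    Real.rpow_add (by positivity) s ε
  calc (1+‖ξ‖^2)^s * ‖mulVecE (projSymbol m c sgn ξ - pinfSymbol sgn) (v ξ)‖^2
      ≤ (1+‖ξ‖^2)^s * ((8*M1)^2 / c^(2*ε) * (1+‖ξ‖^2)^ε * ‖v ξ‖^2) :=
        mul_le_mul_of_nonneg_left (key ξ) hA
    _ = (8*M1)^2 / c^(2*ε) * ((1+‖ξ‖^2)^(s+ε) * ‖v ξ‖^2) := by rw [hrpow_add]; ring

end
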